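/- arXiv:2508.02543 — 2 statements merged into one kernel-verified Lean document; each statement's English description precedes it below -/
import Mathlib

section
/- Let G1 be a finite commutative group of prime order p, let G2 and GT be groups written multiplicatively with GT commutative, let e : G1 → G2 → GT be bilinear, let ĝ ∈ G2, and suppose the map a ↦ e(a, ĝ) from G1 to GT is injective. Let α, x, y be integers, let u ∈ G1 with u ≠ 1, and set w = u^α, v = u^x · w^y, τ = ĝ^α, X̂ = ĝ^x, Ŷ = ĝ^y. Then for all u', v', w' ∈ G1 with u' ≠ 1, the following are equivalent: (i) there exists an integer r with ¬ p ∣ r such that u' = u^r, v' = v^r and w' = w^r; (ii) e(u', τ) = e(w', ĝ) and e(v', ĝ) = e(u', X̂) · e(w', Ŷ). That is, a tuple with non-identity components passes the Trace pairing check with trapdoor τ together with the GVf check for issuer public key (X̂, Ŷ) if and only if it lies in the equivalence class of the master public key (u, v, w) under R. -/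
/-- A tuple with non-identity components passes the Trace pairing check with
trapdoor `τ` together with the GVf check for issuer public key `(X̂, Ŷ)` if
and only if it lies in the equivalence class of the master public key
`(u, v, w)` under R. -/
theorem trace_and_gvf_iff_same_class {G1 G2 GT : Type*}
    [CommGroup G1] [Fintype G1] [Group G2] [CommGroup GT]
    (p : ℕ) (hp : p.Prime) (hcard : Fintype.card G1 = p)
    (e : G1 → G2 → GT)
    (hbil_left : ∀ a b : G1, ∀ c : G2, e (a * b) c = e a c * e b c)
    (hbil_right : ∀ a : G1, ∀ c d : G2, e a (c * d) = e a c * e a d)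
    (ghat : G2) (hinj : Function.Injective (fun a : G1 => e a ghat))
    (α x y : ℤ) (u : G1) (hu : u ≠ 1)
    (w v : G1) (τ Xhat Yhat : G2)
    (hw : w = u ^ α) (hv : v = u ^ x * w ^ y)
    (hτ : τ = ghat ^ α) (hX : Xhat = ghat ^ x) (hY : Yhat = ghat ^ y) :
    ∀ u' v' w' : G1, u' ≠ 1 →
      ((∃ r : ℤ, ¬ (p : ℤ) ∣ r ∧ u' = u ^ r ∧ v' = v ^ r ∧ w' = w ^ r) ↔
        (e u' τ = e w' ghat ∧ e v' ghat = e u' Xhat * e w' Yhat)) := by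
  intro u' v' w' hu'
  have hL : ∀ (a : G1) (n : ℤ) (c : G2), e (a ^ n) c = e a c ^ n := fun a n c =>
    map_zpow (MonoidHom.mk' (fun a => e a c) (fun a b => hbil_left a b c)) a n
  have hR : ∀ (a : G1) (c : G2) (n : ℤ), e a (c ^ n) = e a c ^ n := fun a c n =>
    map_zpow (MonoidHom.mk' (fun c => e a c) (fun c d => hbil_right a c d)) c n
  set g := e u ghat with hg
  have hord : orderOf u = p := by
    have h1 : orderOf u ∣ p := hcard ▸ orderOf_dvd_card
    rcases (hp.eq_one_or_self_of_dvd _ h1) with h | h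
    · exact absurd (orderOf_eq_one_iff.mp h) hu
    · exact h
  have hzpowers : ∀ b : G1, ∃ r : ℤ, b = u ^ r := by
    intro b
    have htop : Subgroup.zpowers u = ⊤ := by
      apply Subgroup.eq_top_of_card_eq
      rw [Nat.card_zpowers, hord, ← hcard, Nat.card_eq_fintype_card]
    have hb : b ∈ Subgroup.zpowers u := htop ▸ Subgroup.mem_top b
    rcases hb with ⟨r, hr⟩
    exact ⟨r, hr.symm⟩
  have k1 : ∀ s t : ℤ, e ((u ^ s) ^ t) ghat = g ^ (s * t) := by
    intro s t; rw [← zpow_mul]; exact hL u (s * t) ghat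
  have k2 : ∀ s t : ℤ, e (u ^ s) (ghat ^ t) = g ^ (s * t) := by
    intro s t; rw [hR, hL, ← zpow_mul]
  have hvu : u ^ x * (u ^ α) ^ y = u ^ (x + α * y) := by
    rw [← zpow_mul, ← zpow_add]
  subst hw hv hτ hX hY
  constructor
  · rintro ⟨r, hr, rfl, rfl, rfl⟩
    constructor
    · rw [show e (u ^ r) (ghat ^ α) = g ^ (r * α) from k2 r α,
        show e ((u ^ α) ^ r) ghat = g ^ (α * r) from k1 α r, mul_comm]
    · rw [hvu, k1, hR (u ^ r) ghat x, hL u r ghat, ← zpow_mul,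
        show e ((u ^ α) ^ r) (ghat ^ y) = e (u ^ (α * r)) (ghat ^ y) from by
          rw [← zpow_mul], k2, ← zpow_add]
      congr 1
      ring
  · rintro ⟨h1, h2⟩
    obtain ⟨r, rfl⟩ := hzpowers u'
    have hwr : w' = (u ^ α) ^ r := by
      apply hinj
      show e w' ghat = e ((u ^ α) ^ r) ghat
      rw [← h1, k2, k1, mul_comm]
    have hvr : v' = (u ^ x * (u ^ α) ^ y) ^ r := by
      apply hinj
      show e v' ghat = e ((u ^ x * (u ^ α) ^ y) ^ r) ghat
      rw [h2, hwr, hvu, k1, k2,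
        show e ((u ^ α) ^ r) (ghat ^ y) = e (u ^ (α * r)) (ghat ^ y) from by
          rw [← zpow_mul], k2, ← zpow_add]
      congr 1
      ring
    refine ⟨r, ?_, rfl, hvr, hwr⟩
    rintro ⟨k, rfl⟩
    apply hu'
    rw [zpow_mul, zpow_natCast, ← hord, pow_orderOf_eq_one, one_zpow]
end

section
/- Let G1, G2, GT be commutative groups written multiplicatively and let e : G1 → G2 → GT be bilinear. Let g, u ∈ G1, ĝ ∈ G2, and let α, x, y, z, s, r be integers. Set f = g^α, w = u^α, v = u^x · w^y, τ = ĝ^α, Ŝ = ĝ^s, f̂' = τ · (ĝ^z)^s, and ρ = e(f, ĝ). Then all of the following hold simultaneously: (i) e(v^r, ĝ) = e(u^r, ĝ^x) · e(w^r, ĝ^y); (ii) e(u^r, τ) = e(w^r, ĝ); (iii) f̂' · Ŝ^{−z} = τ; and (iv) ρ = e(g, τ). That is, in an honest execution of the NGS construction — issuer keys (x, y), opener key z, user master secret α, ElGamal randomness s, nickname randomizer r — the nickname (u^r, v^r, w^r) passes the GVf check, the user's Trace check succeeds, the opener correctly decrypts the user's trapdoor, and the opener's identification check succeeds (the algebraic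 core of the correctness of the NGS construction). -/
/-- Algebraic core of the correctness of the NGS construction: in an honest
execution, the randomized nickname `(u^r, v^r, w^r)` passes the GVf check,
the user's Trace check succeeds, the opener correctly decrypts the user's
trapdoor, and the opener's identification check succeeds. -/
theorem ngs_construction_correctness_core {G1 G2 GT : Type*}
    [CommGroup G1] [CommGroup G2] [CommGroup GT]
    (e : G1 → G2 → GT)
    (hbil_left : ∀ a b : G1, ∀ c : G2, e (a * b) c = e a c * e b c)
    (hbil_right : ∀ a : G1, ∀ c d : G2, e a (c * d) = e a c * e a d)
    (g u : G1) (ghat : G2) (α x y z s r : ℤ)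
    (f w v : G1) (τ Shat fhat' : G2) (ρ : GT)
    (hf : f = g ^ α) (hw : w = u ^ α) (hv : v = u ^ x * w ^ y)
    (hτ : τ = ghat ^ α) (hS : Shat = ghat ^ s)
    (hf' : fhat' = τ * (ghat ^ z) ^ s)
    (hρ : ρ = e f ghat) :
    e (v ^ r) ghat = e (u ^ r) (ghat ^ x) * e (w ^ r) (ghat ^ y) ∧
    e (u ^ r) τ = e (w ^ r) ghat ∧
    fhat' * Shat ^ (-z) = τ ∧
    ρ = e g τ := by
  have hL : ∀ (a : G1) (c : G2) (m : ℤ), e (a ^ m) c = e a c ^ m := by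
    intro a c m
    exact (MonoidHom.mk' (fun a => e a c) (fun p q => hbil_left p q c)).map_zpow a m
  have hR : ∀ (a : G1) (c : G2) (m : ℤ), e a (c ^ m) = e a c ^ m := by
    intro a c m
    exact (MonoidHom.mk' (fun c => e a c) (fun p q => hbil_right a p q)).map_zpow c m
  refine ⟨?_, ?_, ?_, ?_⟩
  · simp only [hv, mul_zpow, hL, hR, hbil_left, ← zpow_mul, mul_comm]
  · simp only [hτ, hw, hL, hR, ← zpow_mul, mul_comm]
  · rw [hf', hS, ← zpow_mul, ← zpow_mul, mul_comm z s, mul_assoc, ← zpow_add]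
    simp
  · rw [hρ, hf, hτ, hL, hR]
end
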